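/- Let N ≥ 1, let n, m ∈ {1,…,N}, let s ∈ ℝ², and let c(i,j) ∈ ℝ² for i,j ∈ {1,…,N} be grid points such that for every p ∈ {1,…,N}: ‖c(p,i) − s‖ > ‖c(p,i+1) − s‖ for all i < n and ‖c(p,i) − s‖ < ‖c(p,i+1) − s‖ for all i ≥ n, and symmetrically for every q ∈ {1,…,N}: ‖c(i,q) − s‖ > ‖c(i+1,q) − s‖ for all i < m and ‖c(i,q) − s‖ < ‖c(i+1,q) − s‖ for all i ≥ m. Let h : ℝ → ℝ be strictly decreasing with h(‖c(i,j) − s‖) > 0 for all i,j, and define the N×N real matrix H by H_{ij} = h(‖c(i,j) − s‖). Then every unit eigenvector with nonnegative entries of HᵀH associated with the largest eigenvalue of HᵀH is unimodal with peak at index n, and every unit eigenvector with nonnegative entries of H Hᵀ associated with the largest eigenvalue of H Hᵀ is unimodal with peak at index m. -/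

import Mathlib

open Matrix

/-- A vector `v ∈ ℝ^N` is unimodal with peak at index `n`:
`0 ≤ v_1 ≤ … ≤ v_n` and `v_n ≥ v_{n+1} ≥ … ≥ v_N ≥ 0`. -/
def UnimodalWithPeak {N : ℕ} (v : Fin N → ℝ) (n : Fin N) : Prop :=
  (∀ i : Fin N, 0 ≤ v i) ∧
  (∀ i j : Fin N, i ≤ j → j ≤ n → v i ≤ v j) ∧
  (∀ i j : Fin N, n ≤ i → i ≤ j → v j ≤ v i)

lemma chain_up {N : ℕ} (n : Fin N) (g : Fin N → ℝ)
    (step : ∀ i : Fin N, ∀ hi : (i : ℕ) + 1 < N, (i : ℕ) < (n : ℕ) →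
      g i < g ⟨(i : ℕ) + 1, hi⟩) :
    ∀ i j : Fin N, i ≤ j → j ≤ n → g i ≤ g j := by
  have key : ∀ d : ℕ, ∀ i : Fin N, ∀ hd : (i : ℕ) + d < N, (i : ℕ) + d ≤ (n : ℕ) →
      g i ≤ g ⟨(i : ℕ) + d, hd⟩ := by
    intro d
    induction d with
    | zero => intro i hd _; simp
    | succ d ih =>
      intro i hd hn
      have hd' : (i : ℕ) + d < N := by omega
      have h1 : g i ≤ g ⟨(i : ℕ) + d, hd'⟩ := ih i hd' (by omega)
      have h2 := step ⟨(i : ℕ) + d, hd'⟩ (by show (i : ℕ) + d + 1 < N; omega) (by simp; omega)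
      refine h1.trans (le_of_lt ?_)
      exact h2
  intro i j hij hjn
  have hj : j = ⟨(i : ℕ) + ((j : ℕ) - (i : ℕ)), by omega⟩ := by
    apply Fin.ext; simp; omega
  rw [hj]
  exact key _ i _ (by have := Fin.le_def.mp hjn; omega)

lemma chain_down {N : ℕ} (n : Fin N) (g : Fin N → ℝ)
    (step : ∀ i : Fin N, ∀ hi : (i : ℕ) + 1 < N, (n : ℕ) ≤ (i : ℕ) →
      g ⟨(i : ℕ) + 1, hi⟩ < g i) :
    ∀ i j : Fin N, n ≤ i → i ≤ j → g j ≤ g i := by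
  have key : ∀ d : ℕ, ∀ i : Fin N, ∀ hd : (i : ℕ) + d < N, (n : ℕ) ≤ (i : ℕ) →
      g ⟨(i : ℕ) + d, hd⟩ ≤ g i := by
    intro d
    induction d with
    | zero => intro i hd _; simp
    | succ d ih =>
      intro i hd hni
      have hd' : (i : ℕ) + d < N := by omega
      have h1 : g ⟨(i : ℕ) + d, hd'⟩ ≤ g i := ih i hd' hni
      have h2 := step ⟨(i : ℕ) + d, hd'⟩ (by show (i : ℕ) + d + 1 < N; omega) (by simp; omega)
      refine le_trans (le_of_lt ?_) h1
      exact h2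
  intro i j hni hij
  have hj : j = ⟨(i : ℕ) + ((j : ℕ) - (i : ℕ)), by omega⟩ := by
    apply Fin.ext; simp; omega
  rw [hj]
  exact key _ i _ (Fin.le_def.mp hni)

lemma perron_unimodal {N : ℕ} (n : Fin N) (A : Matrix (Fin N) (Fin N) ℝ)
    (hApos : ∀ i k, 0 < A i k)
    (hmono : ∀ i j : Fin N, i ≤ j → j ≤ n → ∀ k, A i k ≤ A j k)
    (hanti' : ∀ i j : Fin N, n ≤ i → i ≤ j → ∀ k, A j k ≤ A i k)
    (μ : ℝ) (v : Fin N → ℝ) (hev : A.mulVec v = μ • v) (hv0 : v ≠ 0)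
    (hnn : ∀ i, 0 ≤ v i) : UnimodalWithPeak v n := by
  obtain ⟨i0, hi0⟩ : ∃ i, 0 < v i := by
    by_contra hcon; push_neg at hcon
    exact hv0 (funext fun i => le_antisymm (hcon i) (hnn i))
  have key : ∀ i, ∑ k, A i k * v k = μ * v i := by
    intro i
    have := congrFun hev i
    simpa [Matrix.mulVec, dotProduct] using this
  have hμ : 0 < μ := by
    have h2 : 0 < ∑ k, A i0 k * v k := by
      refine Finset.sum_pos' (fun k _ => mul_nonneg (hApos i0 k).le (hnn k))
        ⟨i0, Finset.mem_univ _, mul_pos (hApos i0 i0) hi0⟩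
    rw [key] at h2
    nlinarith [hnn i0]
  refine ⟨hnn, ?_, ?_⟩
  · intro i j hij hjn
    have hle : ∑ k, A i k * v k ≤ ∑ k, A j k * v k :=
      Finset.sum_le_sum fun k _ => mul_le_mul_of_nonneg_right (hmono i j hij hjn k) (hnn k)
    rw [key, key] at hle
    exact le_of_mul_le_mul_left hle hμ
  · intro i j hni hij
    have hle : ∑ k, A j k * v k ≤ ∑ k, A i k * v k :=
      Finset.sum_le_sum fun k _ => mul_le_mul_of_nonneg_right (hanti' i j hni hij k) (hnn k)
    rw [key, key] at hle
    exact le_of_mul_le_mul_left hle hμ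

/-- Theorem 1 (Unimodal Signature Vector): the nonnegative unit eigenvectors of `HᵀH`
(resp. `HHᵀ`) for the largest eigenvalue are unimodal with peak at index `n` (resp. `m`). -/
theorem unimodal_signature_vector
    (N : ℕ) (hN : 1 ≤ N) (n m : Fin N)
    (s : EuclideanSpace ℝ (Fin 2))
    (c : Fin N → Fin N → EuclideanSpace ℝ (Fin 2))
    -- along each row `p`, distances to the source strictly decrease up to column `n`
    (hcol_dec : ∀ p i : Fin N, ∀ hi : (i : ℕ) + 1 < N, (i : ℕ) < (n : ℕ) →
      ‖c p i - s‖ > ‖c p ⟨(i : ℕ) + 1, hi⟩ - s‖)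
    -- and strictly increase from column `n` on
    (hcol_inc : ∀ p i : Fin N, ∀ hi : (i : ℕ) + 1 < N, (n : ℕ) ≤ (i : ℕ) →
      ‖c p i - s‖ < ‖c p ⟨(i : ℕ) + 1, hi⟩ - s‖)
    -- along each column `q`, distances to the source strictly decrease up to row `m`
    (hrow_dec : ∀ q i : Fin N, ∀ hi : (i : ℕ) + 1 < N, (i : ℕ) < (m : ℕ) →
      ‖c i q - s‖ > ‖c ⟨(i : ℕ) + 1, hi⟩ q - s‖)
    -- and strictly increase from row `m` on
    (hrow_inc : ∀ q i : Fin N, ∀ hi : (i : ℕ) + 1 < N, (m : ℕ) ≤ (i : ℕ) →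
      ‖c i q - s‖ < ‖c ⟨(i : ℕ) + 1, hi⟩ q - s‖)
    (h : ℝ → ℝ) (hanti : StrictAnti h)
    (hpos : ∀ i j : Fin N, 0 < h ‖c i j - s‖)
    (H : Matrix (Fin N) (Fin N) ℝ)
    (hH : ∀ i j : Fin N, H i j = h ‖c i j - s‖) :
    (∀ (μ : ℝ) (v : Fin N → ℝ),
      (Hᵀ * H).mulVec v = μ • v → v ≠ 0 →
      (∀ (μ' : ℝ) (w : Fin N → ℝ), w ≠ 0 → (Hᵀ * H).mulVec w = μ' • w → μ' ≤ μ) →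
      (∑ i, v i ^ 2 = 1) → (∀ i, 0 ≤ v i) →
      UnimodalWithPeak v n) ∧
    (∀ (μ : ℝ) (u : Fin N → ℝ),
      (H * Hᵀ).mulVec u = μ • u → u ≠ 0 →
      (∀ (μ' : ℝ) (w : Fin N → ℝ), w ≠ 0 → (H * Hᵀ).mulVec w = μ' • w → μ' ≤ μ) →
      (∑ i, u i ^ 2 = 1) → (∀ i, 0 ≤ u i) →
      UnimodalWithPeak u m) := by
  haveI : NeZero N := ⟨by omega⟩
  -- rows of H are unimodal in the column index with peak n
  have colmono : ∀ p : Fin N, ∀ i j : Fin N, i ≤ j → j ≤ n → H p i ≤ H p j := by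
    intro p
    refine chain_up n (fun j => H p j) ?_
    intro i hi hin
    simp only [hH]
    exact hanti (hcol_dec p i hi hin)
  have colanti : ∀ p : Fin N, ∀ i j : Fin N, n ≤ i → i ≤ j → H p j ≤ H p i := by
    intro p
    refine chain_down n (fun j => H p j) ?_
    intro i hi hni
    simp only [hH]
    exact hanti (hcol_inc p i hi hni)
  -- columns of H are unimodal in the row index with peak m
  have rowmono : ∀ q : Fin N, ∀ i j : Fin N, i ≤ j → j ≤ m → H i q ≤ H j q := by
    intro q
    refine chain_up m (fun i => H i q) ?_
    intro i hi him
    simp only [hH]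
    exact hanti (hrow_dec q i hi him)
  have rowanti : ∀ q : Fin N, ∀ i j : Fin N, m ≤ i → i ≤ j → H j q ≤ H i q := by
    intro q
    refine chain_down m (fun i => H i q) ?_
    intro i hi hmi
    simp only [hH]
    exact hanti (hrow_inc q i hi hmi)
  have hHpos : ∀ i j : Fin N, 0 < H i j := fun i j => by rw [hH]; exact hpos i j
  constructor
  · intro μ v hev hv0 _ _ hnn
    refine perron_unimodal n (Hᵀ * H) ?_ ?_ ?_ μ v hev hv0 hnn
    · intro i k
      rw [Matrix.mul_apply]
      exact Finset.sum_pos (fun p _ => mul_pos (hHpos p i) (hHpos p k)) Finset.univ_nonempty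
    · intro i j hij hjn k
      rw [Matrix.mul_apply, Matrix.mul_apply]
      exact Finset.sum_le_sum fun p _ =>
        mul_le_mul_of_nonneg_right (colmono p i j hij hjn) (hHpos p k).le
    · intro i j hni hij k
      rw [Matrix.mul_apply, Matrix.mul_apply]
      exact Finset.sum_le_sum fun p _ =>
        mul_le_mul_of_nonneg_right (colanti p i j hni hij) (hHpos p k).le
  · intro μ u hev hu0 _ _ hnn
    refine perron_unimodal m (H * Hᵀ) ?_ ?_ ?_ μ u hev hu0 hnn
    · intro i k
      rw [Matrix.mul_apply]
      exact Finset.sum_pos (fun q _ => mul_pos (hHpos i q) (hHpos k q)) Finset.univ_nonempty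
    · intro i j hij hjm k
      rw [Matrix.mul_apply, Matrix.mul_apply]
      exact Finset.sum_le_sum fun q _ =>
        mul_le_mul_of_nonneg_right (rowmono q i j hij hjm) (hHpos k q).le
    · intro i j hmi hij k
      rw [Matrix.mul_apply, Matrix.mul_apply]
      exact Finset.sum_le_sum fun q _ =>
        mul_le_mul_of_nonneg_right (rowanti q i j hmi hij) (hHpos k q).le
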